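/- Let k be a field of characteristic 0 with a fixed algebraic closure k̄, let K ⊆ k̄ be a finite Galois extension of k, let f ∈ k[x] be a monic irreducible polynomial, let a ∈ k̄ be a root of f, set L = k(a) and K' = K ∩ L. Then f(x), viewed as an element of the rational function field k(x), is a norm from K'(x): there exists h ∈ K'(x)× whose field norm N_{K'(x)/k(x)}(h) equals f(x). (Concretely, if f₁ ∈ K'[x] is the minimal polynomial of a over K', then N_{K'(x)/k(x)}(f₁) = f.) -/

import Mathlib

open Polynomial IntermediateField

set_option synthInstance.maxHeartbeats 1000000
set_option maxHeartbeats 1600000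

/-- The natural algebra structure of the rational function field `E(x)` over the rational
function field `F(x)`, induced by a field extension `E/F`. -/
noncomputable instance ratFuncAlgebra (F E : Type*) [Field F] [Field E] [Algebra F E] :
    Algebra (RatFunc F) (RatFunc E) :=
  (RatFunc.mapRingHom (Polynomial.mapRingHom (algebraMap F E))
    (nonZeroDivisors_le_comap_nonZeroDivisors_of_injective _
      (Polynomial.map_injective _ (algebraMap F E).injective))).toAlgebra

section Aux

variable (F E : Type*) [Field F] [Field E] [Algebra F E]

/-- The algebra structure on polynomial rings induced by a field extension. -/
noncomputable def polyAlg : Algebra (Polynomial F) (Polynomial E) :=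
  (Polynomial.mapRingHom (algebraMap F E)).toAlgebra

/-- The algebra structure of `E(x)` over `F[x]`. -/
noncomputable def polyRatAlg : Algebra (Polynomial F) (RatFunc E) :=
  ((algebraMap (Polynomial E) (RatFunc E)).comp
    (Polynomial.mapRingHom (algebraMap F E))).toAlgebra

attribute [local instance 50] polyAlg polyRatAlg

local instance (priority := 50) polyRatTower :
    IsScalarTower (Polynomial F) (Polynomial E) (RatFunc E) :=
  IsScalarTower.of_algebraMap_eq' rfl

theorem ratFunc_algebraMap_algebraMap (p : Polynomial F) :
    algebraMap (RatFunc F) (RatFunc E) (algebraMap (Polynomial F) (RatFunc F) p) =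
      algebraMap (Polynomial E) (RatFunc E) (p.map (algebraMap F E)) := by
  have h1 : algebraMap (Polynomial F) (RatFunc F) p
      = algebraMap (Polynomial F) (RatFunc F) p /
        algebraMap (Polynomial F) (RatFunc F) (1 : Polynomial F) := by
    rw [map_one, div_one]
  rw [h1]
  show RatFunc.mapRingHom (Polynomial.mapRingHom (algebraMap F E)) _ _ = _
  rw [RatFunc.coe_mapRingHom_eq_coe_map, RatFunc.map_apply_div]
  simp [Polynomial.coe_mapRingHom]

local instance (priority := 50) polyRatTower₂ :
    IsScalarTower (Polynomial F) (RatFunc F) (RatFunc E) :=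
  IsScalarTower.of_algebraMap_eq fun p => (ratFunc_algebraMap_algebraMap F E p).symm

/-- `E[x]` is isomorphic, as an `F`-algebra, to `F[x] ⊗[F] E`. -/
noncomputable def polyTensorEquiv :
    Polynomial E ≃ₐ[F] TensorProduct F (Polynomial F) E :=
  (polyEquivTensor F E).trans (Algebra.TensorProduct.comm F E (Polynomial F))

theorem polyTensorEquiv_symm_tmul (p : Polynomial F) :
    (polyTensorEquiv F E).symm (p ⊗ₜ[F] (1 : E)) = p.map (algebraMap F E) := by
  induction p using Polynomial.induction_on' with
  | add p q hp hq =>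
      rw [TensorProduct.add_tmul, map_add, hp, hq, Polynomial.map_add]
  | monomial n r =>
      simp only [polyTensorEquiv, AlgEquiv.symm_trans_apply,
        Algebra.TensorProduct.comm_symm_tmul, polyEquivTensor_symm_apply_tmul,
        Polynomial.map_monomial]
      rw [Polynomial.sum_monomial_index]
      · rw [one_mul]
      · rw [map_zero, one_mul, Polynomial.monomial_zero_right]

theorem polyTensorEquiv_map (p : Polynomial F) :
    polyTensorEquiv F E (p.map (algebraMap F E)) = p ⊗ₜ[F] (1 : E) := by
  rw [← polyTensorEquiv_symm_tmul F E p, AlgEquiv.apply_symm_apply]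

theorem polyTensorEquiv_C (g : E) :
    polyTensorEquiv F E (Polynomial.C g) = (1 : Polynomial F) ⊗ₜ[F] g := by
  simp [polyTensorEquiv, Algebra.TensorProduct.comm_tmul]

theorem polyTensorEquiv_X :
    polyTensorEquiv F E (Polynomial.X : Polynomial E) =
      (Polynomial.X : Polynomial F) ⊗ₜ[F] (1 : E) := by
  simp [polyTensorEquiv, Algebra.TensorProduct.comm_tmul]

/-- `F[x] ⊗[F] E` is isomorphic, as an `F[x]`-algebra, to `E[x]`. -/
noncomputable def polyTensorAlgEquiv :
    TensorProduct F (Polynomial F) E ≃ₐ[Polynomial F] Polynomial E :=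
  AlgEquiv.ofRingEquiv (f := (polyTensorEquiv F E).symm.toRingEquiv) (fun p => by
    show (polyTensorEquiv F E).symm (p ⊗ₜ[F] (1 : E)) = p.map (algebraMap F E)
    exact polyTensorEquiv_symm_tmul F E p)

/-- An `F`-basis of `E` gives an `F[x]`-basis of `E[x]`. -/
noncomputable def polyBasis {ι : Type*} (b : Module.Basis ι F E) :
    Module.Basis ι (Polynomial F) (Polynomial E) :=
  (Algebra.TensorProduct.basis (Polynomial F) b).map
    (polyTensorAlgEquiv F E).toLinearEquiv

theorem norm_poly_X_sub_C (pb : PowerBasis F E) :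
    Algebra.norm (Polynomial F) ((Polynomial.X : Polynomial E) - Polynomial.C pb.gen) =
      minpoly F pb.gen := by
  classical
  have hx : polyTensorAlgEquiv F E
      ((Polynomial.X : Polynomial F) ⊗ₜ[F] (1 : E) - (1 : Polynomial F) ⊗ₜ[F] pb.gen) =
      (Polynomial.X : Polynomial E) - Polynomial.C pb.gen := by
    show (polyTensorEquiv F E).symm _ = _
    rw [map_sub, ← polyTensorEquiv_X F E, ← polyTensorEquiv_C F E,
      AlgEquiv.symm_apply_apply, AlgEquiv.symm_apply_apply]
  rw [← hx, Algebra.norm_eq_of_algEquiv,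
    Algebra.norm_eq_matrix_det (Algebra.TensorProduct.basis (Polynomial F) pb.basis)]
  have hM : Algebra.leftMulMatrix (Algebra.TensorProduct.basis (Polynomial F) pb.basis)
      ((Polynomial.X : Polynomial F) ⊗ₜ[F] (1 : E) - (1 : Polynomial F) ⊗ₜ[F] pb.gen) =
      (Algebra.leftMulMatrix pb.basis pb.gen).charmatrix := by
    ext i j
    rw [Algebra.leftMulMatrix_eq_repr_mul]
    rw [sub_mul, Algebra.TensorProduct.basis_apply, Algebra.TensorProduct.tmul_mul_tmul,
      Algebra.TensorProduct.tmul_mul_tmul, one_mul, one_mul, map_sub]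
    rw [Matrix.charmatrix_apply, Algebra.leftMulMatrix_eq_repr_mul]
    simp only [Algebra.TensorProduct.basis_repr_tmul, Finsupp.coe_smul, Finsupp.coe_sub,
      Pi.sub_apply, Pi.smul_apply, Finsupp.mapRange_apply, one_smul, smul_eq_mul]
    rw [Module.Basis.repr_self]
    by_cases h : i = j
    · subst h
      simp [Matrix.diagonal_apply_eq, Polynomial.algebraMap_eq]
    · rw [Matrix.diagonal_apply_ne _ h, Finsupp.single_apply, if_neg (Ne.symm h)]
      simp [Polynomial.algebraMap_eq]
  rw [hM]
  exact charpoly_leftMulMatrix pb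


theorem isLocalization_ratFunc [FiniteDimensional F E] :
    IsLocalization (Algebra.algebraMapSubmonoid (Polynomial E) (nonZeroDivisors (Polynomial F)))
      (RatFunc E) := by
  classical
  haveI : Module.Finite (Polynomial F) (Polynomial E) :=
    Module.Finite.of_basis (polyBasis F E (Module.Free.chooseBasis F E))
  haveI hPI : Algebra.IsIntegral (Polynomial F) (Polynomial E) :=
    Algebra.IsIntegral.of_finite _ _
  haveI : IsIntegralClosure (Polynomial E) (Polynomial F) (RatFunc E) := by
    refine ⟨IsFractionRing.injective _ _, fun {x} => ⟨fun hx => ?_, fun ⟨y, hy⟩ => ?_⟩⟩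
    · exact IsIntegrallyClosed.isIntegral_iff.mp (hx.tower_top (A := Polynomial E))
    · exact hy ▸ ((hPI.isIntegral y).map
        (IsScalarTower.toAlgHom (Polynomial F) (Polynomial E) (RatFunc E)))
  haveI : Algebra.IsAlgebraic (RatFunc F) (RatFunc E) := by
    constructor
    intro x
    have hInt : ∀ y : Polynomial E,
        IsIntegral (RatFunc F) (algebraMap (Polynomial E) (RatFunc E) y) := fun y =>
      IsIntegral.tower_top (((hPI.isIntegral y).map
        (IsScalarTower.toAlgHom (Polynomial F) (Polynomial E) (RatFunc E))))
    have hx : x = algebraMap (Polynomial E) (RatFunc E) x.num *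
        (algebraMap (Polynomial E) (RatFunc E) x.denom)⁻¹ := by
      rw [← div_eq_mul_inv, RatFunc.num_div_denom]
    rw [hx]
    exact ((hInt x.num).mul (isAlgebraic_iff_isIntegral.mp
      ((hInt x.denom).isAlgebraic.inv))).isAlgebraic
  exact IsIntegralClosure.isLocalization (Polynomial F) (RatFunc F) (RatFunc E) (Polynomial E)

theorem finiteDimensional_ratFunc [FiniteDimensional F E] :
    FiniteDimensional (RatFunc F) (RatFunc E) := by
  haveI := isLocalization_ratFunc F E
  exact Module.Finite.of_basis
    ((polyBasis F E (Module.Free.chooseBasis F E)).localizationLocalization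
      (RatFunc F) (nonZeroDivisors (Polynomial F)) (RatFunc E))

theorem norm_ratFunc_X_sub_C [FiniteDimensional F E] (g : E)
    (htop : IntermediateField.adjoin F {g} = ⊤) :
    Algebra.norm (RatFunc F)
        (algebraMap (Polynomial E) (RatFunc E) ((Polynomial.X : Polynomial E) - Polynomial.C g)) =
      algebraMap (Polynomial F) (RatFunc F) (minpoly F g) := by
  haveI := isLocalization_ratFunc F E
  haveI : Module.Free (Polynomial F) (Polynomial E) :=
    Module.Free.of_basis (polyBasis F E (Module.Free.chooseBasis F E))
  haveI : Module.Finite (Polynomial F) (Polynomial E) :=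
    Module.Finite.of_basis (polyBasis F E (Module.Free.chooseBasis F E))
  have hint : IsIntegral F g := Algebra.IsIntegral.isIntegral g
  let pb : PowerBasis F E := (IntermediateField.adjoin.powerBasis hint).map
    ((IntermediateField.equivOfEq htop).trans IntermediateField.topEquiv)
  have hgen : pb.gen = g := rfl
  rw [show minpoly F g = minpoly F pb.gen by rw [hgen],
    ← norm_poly_X_sub_C F E pb, hgen,
    Algebra.norm_localization (Polynomial F) (nonZeroDivisors (Polynomial F))]

end Aux

theorem ratFunc_isScalarTower (F E G : Type*) [Field F] [Field E] [Field G]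
    [Algebra F E] [Algebra E G] [Algebra F G] [IsScalarTower F E G] :
    IsScalarTower (RatFunc F) (RatFunc E) (RatFunc G) := by
  apply IsScalarTower.of_algebraMap_eq
  intro x
  rw [← RatFunc.num_div_denom x]
  show RatFunc.mapRingHom _ _ _ = RatFunc.mapRingHom _ _ (RatFunc.mapRingHom _ _ _)
  simp only [RatFunc.coe_mapRingHom_eq_coe_map, RatFunc.map_apply_div,
    Polynomial.coe_mapRingHom, Polynomial.map_map, ← IsScalarTower.algebraMap_eq]

/-- Let `k` be a field of characteristic `0` with a fixed algebraic closure
`k̄`, let `K ⊆ k̄` be a finite Galois extension of `k`, let `f ∈ k[x]` be a monic irreducible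
polynomial, let `a ∈ k̄` be a root of `f`, and set `L = k(a)`, `K' = K ∩ L`. Then `f(x)`,
viewed in the rational function field `k(x)`, is a norm from `K'(x)`: there is
`h ∈ K'(x)ˣ` with `N_{K'(x)/k(x)}(h) = f(x)`.  (Concretely, if `f₁` is the minimal polynomial
of `a` over `K'`, then `N_{K'(x)/k(x)}(f₁) = f`.) -/
theorem stmt0 (k : Type*) [Field k] [CharZero k]
    (K : IntermediateField k (AlgebraicClosure k))
    [FiniteDimensional k K] [IsGalois k K]
    (f : Polynomial k) (hmonic : f.Monic) (hirr : Irreducible f)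
    (a : AlgebraicClosure k) (ha : Polynomial.aeval a f = 0)
    (L K' : IntermediateField k (AlgebraicClosure k))
    (hL : L = IntermediateField.adjoin k {a}) (hK' : K' = K ⊓ L) :
    (∃ h : RatFunc K', h ≠ 0 ∧
        Algebra.norm (RatFunc k) h = algebraMap (Polynomial k) (RatFunc k) f) ∧
      Algebra.norm (RatFunc k)
          (algebraMap (Polynomial K') (RatFunc K') (minpoly K' a)) =
        algebraMap (Polynomial k) (RatFunc k) f := by
  subst hK'
  subst hL
  classical
  have hint : IsIntegral k a := ⟨f, hmonic, by rwa [← Polynomial.aeval_def]⟩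
  have hfeq : minpoly k a = f := (minpoly.eq_of_irreducible_of_monic hirr ha hmonic).symm
  haveI hFDL : FiniteDimensional k (IntermediateField.adjoin k {a}) :=
    IntermediateField.adjoin.finiteDimensional hint
  set L : IntermediateField k (AlgebraicClosure k) := IntermediateField.adjoin k {a} with hLdef
  set K' : IntermediateField k (AlgebraicClosure k) := K ⊓ L with hK'def
  letI : Algebra K' L :=
    (IntermediateField.inclusion (inf_le_right : K' ≤ L)).toRingHom.toAlgebra
  haveI t1 : IsScalarTower k K' L := IsScalarTower.of_algebraMap_eq fun x => rfl
  haveI t2 : IsScalarTower K' L (AlgebraicClosure k) :=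
    IsScalarTower.of_algebraMap_eq fun x => rfl
  haveI : FiniteDimensional k K' := FiniteDimensional.left k K' L
  haveI : FiniteDimensional K' L := FiniteDimensional.right k K' L
  set a' : L := IntermediateField.AdjoinSimple.gen k a with ha'def
  have htop1 : IntermediateField.adjoin k {a'} = ⊤ := by
    apply IntermediateField.adjoin_eq_top_of_algebra
    have h0 := (IntermediateField.adjoin.powerBasis hint).adjoin_gen_eq_top
    rwa [IntermediateField.adjoin.powerBasis_gen] at h0
  have htop2 : IntermediateField.adjoin K' {a'} = ⊤ :=
    IntermediateField.adjoin_eq_top_of_adjoin_eq_top k htop1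
  have hmap : algebraMap L (AlgebraicClosure k) a' = a :=
    IntermediateField.AdjoinSimple.algebraMap_gen k a
  have hmin1 : minpoly k a' = f := by
    rw [ha'def, IntermediateField.minpoly_gen, hfeq]
  have hmin2 : minpoly K' a = minpoly K' a' := by
    rw [← hmap, minpoly.algebraMap_eq (algebraMap L (AlgebraicClosure k)).injective]
  haveI : FiniteDimensional (RatFunc k) (RatFunc L) := finiteDimensional_ratFunc k L
  haveI : IsScalarTower (RatFunc k) (RatFunc K') (RatFunc L) := ratFunc_isScalarTower k K' L
  haveI : CharZero L := charZero_of_injective_algebraMap (algebraMap k L).injective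
  haveI : CharZero (Polynomial L) :=
    charZero_of_injective_algebraMap (algebraMap L (Polynomial L)).injective
  haveI : CharZero (RatFunc L) :=
    charZero_of_injective_algebraMap (IsFractionRing.injective (Polynomial L) (RatFunc L))
  haveI : CharZero (Polynomial k) :=
    charZero_of_injective_algebraMap (algebraMap k (Polynomial k)).injective
  haveI : CharZero (RatFunc k) :=
    charZero_of_injective_algebraMap (IsFractionRing.injective (Polynomial k) (RatFunc k))
  haveI : Algebra.IsIntegral (RatFunc k) (RatFunc L) := Algebra.IsIntegral.of_finite _ _
  haveI : Algebra.IsSeparable (RatFunc k) (RatFunc L) :=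
    ⟨fun x => (minpoly.irreducible (Algebra.IsIntegral.isIntegral x)).separable⟩
  have E1 := norm_ratFunc_X_sub_C k L a' htop1
  have E2 := norm_ratFunc_X_sub_C K' L a' htop2
  have key : Algebra.norm (RatFunc k)
      (algebraMap (Polynomial K') (RatFunc K') (minpoly K' a)) =
      algebraMap (Polynomial k) (RatFunc k) f := by
    rw [hmin2, ← E2, Algebra.norm_norm, E1, hmin1]
  refine ⟨⟨_, ?_, key⟩, key⟩
  have hK'int : IsIntegral K' a := hint.tower_top
  exact (map_ne_zero_iff _ (IsFractionRing.injective (Polynomial K') (RatFunc K'))).mpr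
    (minpoly.ne_zero hK'int)
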